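/- If linear orders L₀ and L₁ are each order-isomorphic to the linguage of a deterministic finite automaton over {0,1}, then so is their binary shuffle Ξ(L₀, L₁). -/

import Mathlib

/-- A deterministic finite automaton with a partial transition function. -/
structure PDFA (σ : Type) where
  /-- the (finite) set of states -/
  State : Type
  finState : Finite State
  /-- the start state -/
  start : State
  /-- the set of accept states -/
  accept : Set State
  /-- the partial transition function -/
  step : State → σ → Option State

namespace PDFA

variable {σ : Type} (M : PDFA σ)

/-- The extended (partial) transition function `δ̂`, reading the word left to right. -/
def run (q : M.State) (w : List σ) : Option M.State :=
  w.foldlM (fun q a => M.step q a) q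

/-- The language accepted by the automaton. -/
def lang : Set (List σ) := {w | ∃ q ∈ M.accept, M.run M.start w = some q}

end PDFA

/-- The inorder relation `<₂` on finite binary words: `x <₂ y` iff, writing
`x = w·x'`, `y = w·y'` with `w` the longest common prefix, either `x'` begins
with `0`(=`false`) or `y'` begins with `1`(=`true`). -/
def inlt : List Bool → List Bool → Prop
  | [], [] => False
  | [], b :: _ => b = true
  | a :: _, [] => a = false
  | a :: x, b :: y => (a = false ∧ b = true) ∨ (a = b ∧ inlt x y)

/-- `(L, r)` is order-isomorphic to the linguage `(L(M), <₂)` of some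
deterministic finite automaton `M` over `{0,1}`. -/
def IsLinguageOf (L : Type) (r : L → L → Prop) : Prop :=
  ∃ M : PDFA Bool, Nonempty (r ≃r fun x y : M.lang => inlt x.1 y.1)

/-- The two-element family of types `L₀, L₁` indexed by `Bool`. -/
def boolFam (L₀ L₁ : Type) : Bool → Type
  | false => L₀
  | true => L₁

/-- The corresponding family of relations. -/
def boolFamRel {L₀ L₁ : Type} (r₀ : L₀ → L₀ → Prop) (r₁ : L₁ → L₁ → Prop) :
    ∀ b, boolFam L₀ L₁ b → boolFam L₀ L₁ b → Prop
  | false => r₀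
  | true => r₁


theorem inlt_irrefl : ∀ x, ¬ inlt x x := by
  intro x hx
  induction x with
  | nil => exact hx
  | cons a t ih =>
    rcases hx with ⟨h1, h2⟩ | ⟨_, h⟩
    · exact absurd (h1 ▸ h2) (by simp)
    · exact ih h

theorem inlt_trans : ∀ x y z, inlt x y → inlt y z → inlt x z := by
  intro x
  induction x with
  | nil =>
    intro y z hxy hyz
    cases y with
    | nil => exact hyz
    | cons b t =>
      cases z with
      | nil => simp [inlt] at *; rcases hyz with ⟨h,_⟩|⟨h,_⟩ <;> simp_all
      | cons c s =>
        simp only [inlt] at *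
        rcases hyz with ⟨h1,h2⟩|⟨h1,h2⟩ <;> simp_all
  | cons a t ih =>
    intro y z hxy hyz
    cases y with
    | nil =>
      cases z with
      | nil => exact hyz.elim
      | cons c s =>
        simp only [inlt] at *
        left; exact ⟨hxy, hyz⟩
    | cons b u =>
      cases z with
      | nil =>
        simp only [inlt] at *
        rcases hxy with ⟨h1,h2⟩|⟨h1,h2⟩ <;> simp_all
      | cons c s =>
        simp only [inlt] at *
        rcases hxy with ⟨h1,h2⟩|⟨h1,h2⟩ <;> rcases hyz with ⟨h3,h4⟩|⟨h3,h4⟩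
        · simp_all
        · subst h3; left; exact ⟨h1, h2⟩
        · subst h1; left; exact ⟨h3, h4⟩
        · subst h1; right; exact ⟨h3, ih u s h2 h4⟩

theorem inlt_trichotomy : ∀ x y, inlt x y ∨ x = y ∨ inlt y x := by
  intro x
  induction x with
  | nil =>
    intro y
    cases y with
    | nil => simp [inlt]
    | cons b t => cases b <;> simp [inlt]
  | cons a t ih =>
    intro y
    cases y with
    | nil => cases a <;> simp [inlt]
    | cons b u =>
      rcases ih u with h | h | h
      · cases a <;> cases b <;> simp_all [inlt]
      · subst h; cases a <;> cases b <;> simp [inlt]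
      · cases a <;> cases b <;> simp_all [inlt]

theorem inlt_append_iff : ∀ (p x y : List Bool), inlt (p ++ x) (p ++ y) ↔ inlt x y := by
  intro p
  induction p with
  | nil => simp
  | cons a t ih => intro x y; simp [inlt, ih]

def decInlt : (x y : List Bool) → Decidable (inlt x y)
  | [], [] => isFalse fun h => h
  | [], b :: _ => inferInstanceAs (Decidable (b = true))
  | a :: _, [] => inferInstanceAs (Decidable (a = false))
  | a :: x, b :: y =>
    have := decInlt x y
    inferInstanceAs (Decidable ((a = false ∧ b = true) ∨ (a = b ∧ inlt x y)))

instance : DecidableRel inlt := decInlt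

/-- Type synonym for `List Bool` carrying the inorder. -/
def Node : Type := List Bool

instance : IsTrichotomous Node inlt :=
  ⟨fun a b h1 h2 => ((inlt_trichotomy a b).resolve_left h1).resolve_right h2⟩
instance : IsTrans Node inlt := ⟨inlt_trans⟩
instance : IsIrrefl Node inlt := ⟨fun a => inlt_irrefl a⟩
instance : IsStrictTotalOrder Node inlt := {}

instance : LinearOrder Node := @linearOrderOfSTO Node inlt _ decInlt

theorem Node.lt_iff {x y : Node} : x < y ↔ inlt x y := Iff.rfl

instance : Countable Node := inferInstanceAs (Countable (List Bool))
instance : Encodable Node := inferInstanceAs (Encodable (List Bool))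
instance : Nonempty Node := ⟨([] : List Bool)⟩

/-- the color of a node: its last letter (`false` for the root). -/
def ncol (u : List Bool) : Bool := u.getLastD false

theorem getLastD_ne_nil {m : List Bool} (h : m ≠ []) (d e : Bool) :
    m.getLastD d = m.getLastD e := by
  cases m with
  | nil => exact absurd rfl h
  | cons a t => rw [List.getLastD_cons, List.getLastD_cons]

theorem inlt_append_true (u t : List Bool) : inlt u (u ++ true :: t) := by
  have := (inlt_append_iff u [] (true :: t)).mpr (by simp [inlt])
  simpa using this

theorem inlt_append_false (u t : List Bool) : inlt (u ++ false :: t) u := by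
  have := (inlt_append_iff u (false :: t) []).mpr (by simp [inlt])
  simpa using this

instance : NoMaxOrder Node := ⟨fun u => ⟨List.append u [true], inlt_append_true u []⟩⟩
instance : NoMinOrder Node := ⟨fun u => ⟨List.append u [false], inlt_append_false u []⟩⟩

/-- colored density for the node order -/
theorem node_dense (i : Bool) : ∀ u v : List Bool, inlt u v →
    ∃ m, inlt u m ∧ inlt m v ∧ m ≠ [] ∧ m.getLastD false = i := by
  intro u
  induction u with
  | nil =>
    intro v hv
    cases v with
    | nil => exact hv.elim
    | cons b t =>
      have hb : b = true := hv
      subst hb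
      cases i with
      | false =>
        exact ⟨(true :: t) ++ [false], by simp [inlt], inlt_append_false (true :: t) [],
          by simp, List.getLastD_concat⟩
      | true =>
        refine ⟨((true :: t) ++ [false]) ++ [true], ?_, ?_, by simp, List.getLastD_concat⟩
        · simp [inlt]
        · have : ((true :: t) ++ [false]) ++ [true] = (true :: t) ++ (false :: [true]) := by simp
          rw [this]; exact inlt_append_false (true :: t) [true]
  | cons a x ih =>
    intro v hv
    cases v with
    | nil =>
      have ha : a = false := hv
      subst ha
      cases i with
      | true =>
        exact ⟨(false :: x) ++ [true], inlt_append_true _ [], by simp [inlt],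
          by simp, List.getLastD_concat⟩
      | false =>
        refine ⟨((false :: x) ++ [true]) ++ [false], ?_, by simp [inlt], by simp,
          List.getLastD_concat⟩
        · have : ((false :: x) ++ [true]) ++ [false] = (false :: x) ++ (true :: [false]) := by simp
          rw [this]; exact inlt_append_true _ [false]
    | cons b y =>
      rcases hv with ⟨ha, hb⟩ | ⟨hab, hxy⟩
      · subst ha; subst hb
        cases i with
        | true =>
          exact ⟨(false :: x) ++ [true], inlt_append_true _ [], by simp [inlt],
            by simp, List.getLastD_concat⟩
        | false =>
          refine ⟨((false :: x) ++ [true]) ++ [false], ?_, by simp [inlt], by simp,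
            List.getLastD_concat⟩
          · have : ((false :: x) ++ [true]) ++ [false] = (false :: x) ++ (true :: [false]) := by
              simp
            rw [this]; exact inlt_append_true _ [false]
      · subst hab
        obtain ⟨m, h1, h2, h3, h4⟩ := ih y hxy
        refine ⟨a :: m, Or.inr ⟨rfl, h1⟩, Or.inr ⟨rfl, h2⟩, by simp, ?_⟩
        rw [List.getLastD_cons, getLastD_ne_nil h3 a false]
        exact h4

instance : DenselyOrdered Node :=
  ⟨fun u v h => by
    obtain ⟨m, h1, h2, _, _⟩ := node_dense false u v h
    exact ⟨m, h1, h2⟩⟩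

theorem ncol_dense (i : Bool) (u v : Node) (h : u < v) :
    ∃ m : Node, u < m ∧ m < v ∧ ncol m = i := by
  obtain ⟨m, h1, h2, _, h4⟩ := node_dense i u v h
  exact ⟨m, h1, h2, h4⟩


noncomputable section ColoredBF

open Order

variable {α β : Type} [LinearOrder α] [LinearOrder β]

/-- both colors are dense -/
def ColDense {γ : Type} [LinearOrder γ] (c : γ → Bool) : Prop :=
  ∀ i a b, a < b → ∃ m, a < m ∧ m < b ∧ c m = i

variable (cα : α → Bool) (cβ : β → Bool)

theorem ColDense.exists_gt [NoMaxOrder β] (hd : ColDense cβ) (i : Bool) (x : β) :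
    ∃ m, x < m ∧ cβ m = i := by
  obtain ⟨y, hy⟩ := NoMaxOrder.exists_gt x
  obtain ⟨m, h1, _, h3⟩ := hd i x y hy
  exact ⟨m, h1, h3⟩

theorem ColDense.exists_lt [NoMinOrder β] (hd : ColDense cβ) (i : Bool) (x : β) :
    ∃ m, m < x ∧ cβ m = i := by
  obtain ⟨y, hy⟩ := NoMinOrder.exists_lt x
  obtain ⟨m, _, h2, h3⟩ := hd i y x hy
  exact ⟨m, h2, h3⟩

theorem ColDense.exists_col [Nonempty β] [NoMaxOrder β] (hd : ColDense cβ) (i : Bool) :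
    ∃ m, cβ m = i := by
  obtain ⟨x⟩ := ‹Nonempty β›
  obtain ⟨m, _, h⟩ := hd.exists_gt cβ i x
  exact ⟨m, h⟩

theorem col_exists_between_finsets [NoMinOrder β] [NoMaxOrder β] [Nonempty β]
    (hd : ColDense cβ) (i : Bool) (lo hi : Finset β)
    (lo_lt_hi : ∀ x ∈ lo, ∀ y ∈ hi, x < y) :
    ∃ m : β, cβ m = i ∧ (∀ x ∈ lo, x < m) ∧ ∀ y ∈ hi, m < y := by
  by_cases nlo : lo.Nonempty
  · by_cases nhi : hi.Nonempty
    · obtain ⟨m, hm1, hm2, hm3⟩ :=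
        hd i _ _ (lo_lt_hi _ (Finset.max'_mem _ nlo) _ (Finset.min'_mem _ nhi))
      exact ⟨m, hm3, fun x hx => lt_of_le_of_lt (Finset.le_max' lo x hx) hm1,
        fun y hy => lt_of_lt_of_le hm2 (Finset.min'_le hi y hy)⟩
    · obtain ⟨m, hm, hmc⟩ := hd.exists_gt cβ i (Finset.max' lo nlo)
      exact ⟨m, hmc, fun x hx => lt_of_le_of_lt (Finset.le_max' lo x hx) hm,
        fun y hy => (nhi ⟨y, hy⟩).elim⟩
  · by_cases nhi : hi.Nonempty
    · obtain ⟨m, hm, hmc⟩ := hd.exists_lt cβ i (Finset.min' hi nhi)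
      exact ⟨m, hmc, fun x hx => (nlo ⟨x, hx⟩).elim,
        fun y hy => lt_of_lt_of_le hm (Finset.min'_le hi y hy)⟩
    · obtain ⟨m, hmc⟩ := hd.exists_col cβ i
      exact ⟨m, hmc, fun x hx => (nlo ⟨x, hx⟩).elim, fun y hy => (nhi ⟨y, hy⟩).elim⟩

/-- colored partial isomorphisms -/
def CPI (cα : α → Bool) (cβ : β → Bool) : Type :=
  { f : Finset (α × β) //
    (∀ p ∈ f, ∀ q ∈ f, cmp (Prod.fst p) (Prod.fst q) = cmp (Prod.snd p) (Prod.snd q)) ∧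
    ∀ p ∈ f, cβ (Prod.snd p) = cα (Prod.fst p) }

namespace CPI

instance : Inhabited (CPI cα cβ) :=
  ⟨⟨∅, fun _p h => (Finset.notMem_empty _ h).elim, fun _p h => (Finset.notMem_empty _ h).elim⟩⟩

instance : Preorder (CPI cα cβ) := Subtype.preorder _

variable {cα cβ}

theorem exists_across [NoMinOrder β] [NoMaxOrder β] [Nonempty β] (hd : ColDense cβ)
    (f : CPI cα cβ) (a : α) :
    ∃ b : β, cβ b = cα a ∧ ∀ p ∈ f.val, cmp (Prod.fst p) a = cmp (Prod.snd p) b := by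
  by_cases h : ∃ b, (a, b) ∈ f.val
  · obtain ⟨b, hb⟩ := h
    exact ⟨b, f.prop.2 _ hb, fun p hp => f.prop.1 _ hp _ hb⟩
  have key :
    ∀ x ∈ (f.val.filter fun p : α × β => p.fst < a).image Prod.snd,
      ∀ y ∈ (f.val.filter fun p : α × β => a < p.fst).image Prod.snd, x < y := by
    intro x hx y hy
    rw [Finset.mem_image] at hx hy
    rcases hx with ⟨p, hp1, rfl⟩
    rcases hy with ⟨q, hq1, rfl⟩
    rw [Finset.mem_filter] at hp1 hq1
    rw [← lt_iff_lt_of_cmp_eq_cmp (f.prop.1 _ hp1.1 _ hq1.1)]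
    exact lt_trans hp1.right hq1.right
  obtain ⟨b, hbc, hb⟩ := col_exists_between_finsets cβ hd (cα a) _ _ key
  refine ⟨b, hbc, ?_⟩
  rintro ⟨p1, p2⟩ hp
  have hne : p1 ≠ a := fun he => h ⟨p2, he ▸ hp⟩
  cases' lt_or_gt_of_ne hne with hl hr
  · have h2 : p1 < a ∧ p2 < b :=
      ⟨hl, hb.1 _ (Finset.mem_image.mpr ⟨(p1, p2), Finset.mem_filter.mpr ⟨hp, hl⟩, rfl⟩)⟩
    rw [← cmp_eq_lt_iff, ← cmp_eq_lt_iff] at h2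
    exact h2.1.trans h2.2.symm
  · have h2 : a < p1 ∧ b < p2 :=
      ⟨hr, hb.2 _ (Finset.mem_image.mpr ⟨(p1, p2), Finset.mem_filter.mpr ⟨hp, hr⟩, rfl⟩)⟩
    rw [← cmp_eq_gt_iff, ← cmp_eq_gt_iff] at h2
    exact h2.1.trans h2.2.symm

/-- swap the sides -/
protected def comm (f : CPI cα cβ) : CPI cβ cα :=
  ⟨f.val.image (Equiv.prodComm α β), by
    constructor
    · intro p hp q hq
      rw [Finset.mem_image] at hp hq
      obtain ⟨p', hp', rfl⟩ := hp
      obtain ⟨q', hq', rfl⟩ := hq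
      exact (f.prop.1 p' hp' q' hq').symm
    · intro p hp
      rw [Finset.mem_image] at hp
      obtain ⟨p', hp', rfl⟩ := hp
      exact (f.prop.2 p' hp').symm⟩

variable (cβ)

/-- partial isos defined at `a : α` are cofinal -/
def definedAtLeft [NoMinOrder β] [NoMaxOrder β] [Nonempty β] (hd : ColDense cβ) (a : α) :
    Cofinal (CPI cα cβ) where
  carrier := {f | ∃ b : β, (a, b) ∈ f.val}
  isCofinal f := by
    obtain ⟨b, hbc, a_b⟩ := exists_across hd f a
    refine ⟨⟨insert (a, b) f.val, ?_, ?_⟩, ⟨b, Finset.mem_insert_self _ _⟩,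
      Finset.subset_insert _ _⟩
    · intro p hp q hq
      rw [Finset.mem_insert] at hp hq
      rcases hp with (rfl | pf) <;> rcases hq with (rfl | qf)
      · simp only [cmp_self_eq_eq]
      · rw [cmp_eq_cmp_symm]
        exact a_b _ qf
      · exact a_b _ pf
      · exact f.prop.1 _ pf _ qf
    · intro p hp
      rw [Finset.mem_insert] at hp
      rcases hp with rfl | pf
      · exact hbc
      · exact f.prop.2 _ pf

variable (cα) {cβ}

/-- partial isos defined at `b : β` are cofinal -/
def definedAtRight [NoMinOrder α] [NoMaxOrder α] [Nonempty α] (hd : ColDense cα) (b : β) :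
    Cofinal (CPI cα cβ) where
  carrier := {f | ∃ a, (a, b) ∈ f.val}
  isCofinal f := by
    rcases (definedAtLeft cα hd b).isCofinal f.comm with ⟨f', ⟨a, ha⟩, hl⟩
    refine ⟨f'.comm, ⟨a, ?_⟩, ?_⟩
    · change (a, b) ∈ f'.val.image _
      rw [Finset.mem_image]
      exact ⟨(b, a), ha, rfl⟩
    · intro p hp
      change p ∈ f'.val.image _
      rw [Finset.mem_image]
      have : (Equiv.prodComm α β p) ∈ f.comm.val := by
        change _ ∈ f.val.image _
        rw [Finset.mem_image]
        exact ⟨p, hp, rfl⟩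
      exact ⟨Equiv.prodComm α β p, hl this, by simp⟩

end CPI

open CPI in
theorem colored_iso [Encodable α] [Encodable β]
    [NoMinOrder α] [NoMaxOrder α] [Nonempty α] [NoMinOrder β] [NoMaxOrder β] [Nonempty β]
    (hdα : ColDense cα) (hdβ : ColDense cβ) :
    ∃ e : α ≃o β, ∀ a, cβ (e a) = cα a := by
  let to_cofinal : α ⊕ β → Cofinal (CPI cα cβ) := fun p =>
    Sum.recOn p (definedAtLeft cβ hdβ) (definedAtRight cα hdα)
  let our_ideal : Ideal (CPI cα cβ) := idealOfCofinals default to_cofinal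
  have hF : ∀ a : α, ∃ b : β, ∃ f ∈ our_ideal, (a, b) ∈ f.val := by
    intro a
    obtain ⟨f, hf1, hf2⟩ := cofinal_meets_idealOfCofinals default to_cofinal (Sum.inl a)
    obtain ⟨b, hb⟩ := hf1
    exact ⟨b, f, hf2, hb⟩
  have hG : ∀ b : β, ∃ a : α, ∃ f ∈ our_ideal, (a, b) ∈ f.val := by
    intro b
    obtain ⟨f, hf1, hf2⟩ := cofinal_meets_idealOfCofinals default to_cofinal (Sum.inr b)
    obtain ⟨a, ha⟩ := hf1
    exact ⟨a, f, hf2, ha⟩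
  choose F hF' using hF
  choose G hG' using hG
  have key : ∀ a b, cmp a (G b) = cmp (F a) b := by
    intro a b
    rcases hF' a with ⟨f, hf, ha⟩
    rcases hG' b with ⟨g, hg, hb⟩
    rcases our_ideal.directed _ hf _ hg with ⟨m, _, fm, gm⟩
    exact m.prop.1 (a, _) (fm ha) (_, b) (gm hb)
  refine ⟨OrderIso.ofCmpEqCmp F G key, ?_⟩
  intro a
  rcases hF' a with ⟨f, _, ha⟩
  exact f.prop.2 _ ha

end ColoredBF


section Automaton

theorem PDFA.run_nil {σ : Type} (M : PDFA σ) (q : M.State) : M.run q [] = some q := rfl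

theorem PDFA.run_cons {σ : Type} (M : PDFA σ) (q : M.State) (a : σ) (w : List σ) :
    M.run q (a :: w) = (M.step q a).bind fun q' => M.run q' w := by
  simp [PDFA.run, List.foldlM]

/-- states of the combined automaton -/
inductive St (A B : Type) : Type
  | pf | pt | rf | rt | s
  | m0 (q : A)
  | m1 (q : B)

namespace St

def toSum {A B : Type} : St A B → (Fin 5) ⊕ A ⊕ B
  | pf => .inl 0
  | pt => .inl 1
  | rf => .inl 2
  | rt => .inl 3
  | s => .inl 4
  | m0 q => .inr (.inl q)
  | m1 q => .inr (.inr q)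

theorem toSum_inj {A B : Type} : Function.Injective (toSum (A := A) (B := B)) := by
  intro x y h
  cases x <;> cases y <;> simp [toSum] at h <;> simp_all

instance {A B : Type} [Finite A] [Finite B] : Finite (St A B) :=
  Finite.of_injective _ toSum_inj

end St

variable (M₀ M₁ : PDFA Bool)

/-- the combined automaton -/
@[reducible] def mkM : PDFA Bool where
  State := St M₀.State M₁.State
  finState := by
    have := M₀.finState
    have := M₁.finState
    infer_instance
  start := .pf
  accept := {x | (∃ q ∈ M₀.accept, x = .m0 q) ∨ (∃ q ∈ M₁.accept, x = .m1 q)}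
  step := fun s a =>
    match s, a with
    | .pf, false => some .rf
    | .pf, true => some .s
    | .pt, false => some .rt
    | .pt, true => some .s
    | .rf, false => some .pf
    | .rf, true => some (.m0 M₀.start)
    | .rt, false => some .pf
    | .rt, true => some (.m1 M₁.start)
    | .s, false => none
    | .s, true => some .pt
    | .m0 q, a => (M₀.step q a).map .m0
    | .m1 q, a => (M₁.step q a).map .m1

/-- acceptance starting from a given state -/
def AccS (st : (mkM M₀ M₁).State) (x : List Bool) : Prop :=
  ∃ q ∈ (mkM M₀ M₁).accept, (mkM M₀ M₁).run st x = some q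

theorem acc_cons_some {st st' : (mkM M₀ M₁).State} {a : Bool}
    (h : (mkM M₀ M₁).step st a = some st') (x : List Bool) :
    AccS M₀ M₁ st (a :: x) ↔ AccS M₀ M₁ st' x := by
  unfold AccS
  rw [PDFA.run_cons, h]
  rfl

theorem acc_cons_none {st : (mkM M₀ M₁).State} {a : Bool}
    (h : (mkM M₀ M₁).step st a = none) (x : List Bool) :
    ¬ AccS M₀ M₁ st (a :: x) := by
  unfold AccS
  rw [PDFA.run_cons, h]
  simp

theorem run_m0 (x : List Bool) : ∀ q : M₀.State,
    (mkM M₀ M₁).run (.m0 q) x = (M₀.run q x).map .m0 := by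
  induction x with
  | nil => intro q; rfl
  | cons a t ih =>
    intro q
    rw [PDFA.run_cons, PDFA.run_cons]
    have hstep : (mkM M₀ M₁).step (St.m0 q) a = (M₀.step q a).map St.m0 := rfl
    rw [hstep]
    cases h : M₀.step q a with
    | none => simp
    | some q' => simp [ih q']

theorem run_m1 (x : List Bool) : ∀ q : M₁.State,
    (mkM M₀ M₁).run (.m1 q) x = (M₁.run q x).map .m1 := by
  induction x with
  | nil => intro q; rfl
  | cons a t ih =>
    intro q
    rw [PDFA.run_cons, PDFA.run_cons]
    have hstep : (mkM M₀ M₁).step (St.m1 q) a = (M₁.step q a).map St.m1 := rfl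
    rw [hstep]
    cases h : M₁.step q a with
    | none => simp
    | some q' => simp [ih q']

theorem acc_m0 (x : List Bool) (q : M₀.State) :
    AccS M₀ M₁ (.m0 q) x ↔ ∃ q' ∈ M₀.accept, M₀.run q x = some q' := by
  unfold AccS
  rw [run_m0]
  constructor
  · rintro ⟨qa, hqa, hrun⟩
    cases h : M₀.run q x with
    | none => rw [h] at hrun; simp at hrun
    | some q' =>
      rw [h] at hrun
      simp at hrun
      have hqa' : (∃ p ∈ M₀.accept, qa = St.m0 p) ∨ (∃ p ∈ M₁.accept, qa = St.m1 p) := hqa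
      rcases hqa' with ⟨p, hp, hpe⟩ | ⟨p, hp, hpe⟩
      · subst hpe
        cases hrun
        exact ⟨_, hp, rfl⟩
      · subst hpe
        cases hrun
  · rintro ⟨q', hq', hrun⟩
    exact ⟨.m0 q', Or.inl ⟨q', hq', rfl⟩, by rw [hrun]; rfl⟩

theorem acc_m1 (x : List Bool) (q : M₁.State) :
    AccS M₀ M₁ (.m1 q) x ↔ ∃ q' ∈ M₁.accept, M₁.run q x = some q' := by
  unfold AccS
  rw [run_m1]
  constructor
  · rintro ⟨qa, hqa, hrun⟩
    cases h : M₁.run q x with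
    | none => rw [h] at hrun; simp at hrun
    | some q' =>
      rw [h] at hrun
      simp at hrun
      have hqa' : (∃ p ∈ M₀.accept, qa = St.m0 p) ∨ (∃ p ∈ M₁.accept, qa = St.m1 p) := hqa
      rcases hqa' with ⟨p, hp, hpe⟩ | ⟨p, hp, hpe⟩
      · subst hpe
        cases hrun
      · subst hpe
        cases hrun
        exact ⟨_, hp, rfl⟩
  · rintro ⟨q', hq', hrun⟩
    exact ⟨.m1 q', Or.inr ⟨q', hq', rfl⟩, by rw [hrun]; rfl⟩

theorem not_acc_nil (st : (mkM M₀ M₁).State)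
    (h : ∀ q, st ≠ .m0 q) (h' : ∀ q, st ≠ .m1 q) : ¬ AccS M₀ M₁ st [] := by
  rintro ⟨qa, hqa, hrun⟩
  rw [PDFA.run_nil] at hrun
  cases hrun
  have hqa' : (∃ p ∈ M₀.accept, st = St.m0 p) ∨ (∃ p ∈ M₁.accept, st = St.m1 p) := hqa
  rcases hqa' with ⟨p, _, hpe⟩ | ⟨p, _, hpe⟩
  · exact h p hpe
  · exact h' p hpe

/-- fiber membership -/
def goodW : Bool → List Bool → Prop
  | false => fun w => w ∈ M₀.lang
  | true => fun w => w ∈ M₁.lang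

/-- doubling encoding of nodes -/
def code : List Bool → List Bool
  | [] => []
  | b :: u => b :: b :: code u

/-- encoding of a node together with a fiber word -/
def enc (u w : List Bool) : List Bool := code u ++ false :: true :: w

def pcol : Bool → (mkM M₀ M₁).State
  | false => .pf
  | true => .pt

theorem enc_eq_cons (u w : List Bool) (a a2 : Bool) (t : List Bool) :
    (a :: a2 :: t = enc u w) ↔
      ((u = [] ∧ a = false ∧ a2 = true ∧ t = w) ∨
        (∃ u', u = a :: u' ∧ a2 = a ∧ t = enc u' w)) := by
  cases u with
  | nil => simp [enc, code, and_assoc, eq_comm]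
  | cons c u' =>
    constructor
    · intro h
      simp only [enc, code, List.cons_append] at h
      injection h with h1 h2
      injection h2 with h3 h4
      subst h1
      subst h3
      exact Or.inr ⟨u', rfl, rfl, h4⟩
    · rintro (⟨h, _⟩ | ⟨u'', hu, rfl, rfl⟩)
      · exact absurd h (by simp)
      · injection hu with h1 h2
        subst h1
        subst h2
        simp [enc, code]

theorem enc_ne_nil (u w : List Bool) : enc u w ≠ [] := by
  cases u <;> simp [enc, code]

theorem enc_ne_single (u w : List Bool) (a : Bool) : enc u w ≠ [a] := by
  cases u <;> simp [enc, code]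

theorem main_char : ∀ (n : ℕ) (x : List Bool), x.length ≤ n → ∀ b : Bool,
    (AccS M₀ M₁ (pcol M₀ M₁ b) x ↔
      ∃ u w, x = enc u w ∧ goodW M₀ M₁ (u.getLastD b) w) := by
  intro n
  induction n with
  | zero =>
    intro x hx b
    have : x = [] := List.length_eq_zero_iff.mp (Nat.le_zero.mp hx)
    subst this
    constructor
    · intro h
      exact absurd h (not_acc_nil M₀ M₁ _ (by cases b <;> simp [pcol]) (by cases b <;> simp [pcol]))
    · rintro ⟨u, w, h, _⟩
      exact absurd h.symm (enc_ne_nil u w)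
  | succ n ih =>
    intro x hx b
    match x with
    | [] =>
      constructor
      · intro h
        exact absurd h
          (not_acc_nil M₀ M₁ _ (by cases b <;> simp [pcol]) (by cases b <;> simp [pcol]))
      · rintro ⟨u, w, h, _⟩
        exact absurd h.symm (enc_ne_nil u w)
    | [a] =>
      constructor
      · intro h
        cases b <;> cases a <;>
          · simp only [pcol] at h
            rw [acc_cons_some M₀ M₁ (by rfl)] at h
            exact absurd h (not_acc_nil M₀ M₁ _ (by simp) (by simp))
      · rintro ⟨u, w, h, _⟩
        exact absurd h.symm (enc_ne_single u w a)
    | a :: a2 :: t =>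
      have ht : t.length ≤ n := by
        simp at hx
        omega
      match a, a2 with
      | false, false =>
        have step2 : AccS M₀ M₁ (pcol M₀ M₁ b) (false :: false :: t) ↔
            AccS M₀ M₁ (pcol M₀ M₁ false) t := by
          cases b <;>
            · simp only [pcol]
              rw [acc_cons_some M₀ M₁ (by rfl), acc_cons_some M₀ M₁ (by rfl)]
              try rfl
        rw [step2, ih t ht false]
        constructor
        · rintro ⟨u, w, rfl, hg⟩
          refine ⟨false :: u, w, ?_, ?_⟩
          · simp [enc, code]
          · rwa [List.getLastD_cons]
        · rintro ⟨u, w, hx2, hg⟩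
          rw [enc_eq_cons] at hx2
          rcases hx2 with ⟨_, _, h, _⟩ | ⟨u', rfl, _, ht'⟩
          · exact absurd h (by simp)
          · rw [List.getLastD_cons] at hg
            exact ⟨u', w, ht', hg⟩
      | false, true =>
        have step2 : AccS M₀ M₁ (pcol M₀ M₁ b) (false :: true :: t) ↔
            goodW M₀ M₁ b t := by
          cases b
          · simp only [pcol]
            rw [acc_cons_some M₀ M₁ (by rfl), acc_cons_some M₀ M₁ (by rfl)]
            exact acc_m0 M₀ M₁ t M₀.start
          · simp only [pcol]
            rw [acc_cons_some M₀ M₁ (by rfl), acc_cons_some M₀ M₁ (by rfl)]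
            exact acc_m1 M₀ M₁ t M₁.start
        rw [step2]
        constructor
        · intro h
          exact ⟨[], t, by simp [enc, code], h⟩
        · rintro ⟨u, w, hx2, hg⟩
          rw [enc_eq_cons] at hx2
          rcases hx2 with ⟨rfl, _, _, rfl⟩ | ⟨u', _, h, _⟩
          · exact hg
          · exact absurd h (by simp)
      | true, false =>
        constructor
        · intro h
          have step1 : AccS M₀ M₁ (pcol M₀ M₁ b) (true :: false :: t) ↔
              AccS M₀ M₁ .s (false :: t) := by
            cases b <;>
              · simp only [pcol]
                exact acc_cons_some M₀ M₁ (by rfl) _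
          rw [step1] at h
          exact absurd h (acc_cons_none M₀ M₁ (by rfl) t)
        · rintro ⟨u, w, hx2, hg⟩
          rw [enc_eq_cons] at hx2
          rcases hx2 with ⟨_, h, _⟩ | ⟨u', _, h, _⟩
          · exact absurd h (by simp)
          · exact absurd h (by simp)
      | true, true =>
        have step2 : AccS M₀ M₁ (pcol M₀ M₁ b) (true :: true :: t) ↔
            AccS M₀ M₁ (pcol M₀ M₁ true) t := by
          cases b <;>
            · simp only [pcol]
              rw [acc_cons_some M₀ M₁ (by rfl), acc_cons_some M₀ M₁ (by rfl)]
              try rfl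
        rw [step2, ih t ht true]
        constructor
        · rintro ⟨u, w, rfl, hg⟩
          refine ⟨true :: u, w, ?_, ?_⟩
          · simp [enc, code]
          · rwa [List.getLastD_cons]
        · rintro ⟨u, w, hx2, hg⟩
          rw [enc_eq_cons] at hx2
          rcases hx2 with ⟨_, h, _⟩ | ⟨u', rfl, _, ht'⟩
          · exact absurd h (by simp)
          · rw [List.getLastD_cons] at hg
            exact ⟨u', w, ht', hg⟩

theorem lang_char (x : List Bool) :
    x ∈ (mkM M₀ M₁).lang ↔ ∃ u w, x = enc u w ∧ goodW M₀ M₁ (u.getLastD false) w := by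
  have := main_char M₀ M₁ x.length x le_rfl false
  exact this

end Automaton


theorem enc_inlt : ∀ (u v w w' : List Bool),
    inlt (enc u w) (enc v w') ↔ (inlt u v ∨ (u = v ∧ inlt w w')) := by
  intro u
  induction u with
  | nil =>
    intro v w w'
    cases v with
    | nil => simp [enc, code, inlt]
    | cons b v' => cases b <;> simp [enc, code, inlt]
  | cons a u' ih =>
    intro v w w'
    cases v with
    | nil => cases a <;> simp [enc, code, inlt]
    | cons b v' =>
      have h := ih v' w w'
      simp only [enc] at h
      cases a <;> cases b <;> simp [enc, code, inlt, h]

theorem enc_inj {u v w w' : List Bool} (h : enc u w = enc v w') : u = v ∧ w = w' := by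
  rcases inlt_trichotomy u v with huv | huv | huv
  · exact absurd ((enc_inlt u v w w').mpr (Or.inl huv)) (h ▸ inlt_irrefl _)
  · subst huv
    refine ⟨rfl, ?_⟩
    rcases inlt_trichotomy w w' with hw | hw | hw
    · exact absurd ((enc_inlt u u w w').mpr (Or.inr ⟨rfl, hw⟩)) (h ▸ inlt_irrefl _)
    · exact hw
    · exact absurd ((enc_inlt u u w' w).mpr (Or.inr ⟨rfl, hw⟩)) (h ▸ inlt_irrefl _)
  · exact absurd ((enc_inlt v u w' w).mpr (Or.inl huv)) (h ▸ inlt_irrefl _)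

/-- If `L₀` and `L₁` are each order-isomorphic to the linguage of a
DFA over `{0,1}`, then so is their binary shuffle `Ξ(L₀, L₁) = Σ_{q ∈ ℚ} L_{χ(q)}`,
where `χ : ℚ → {0,1}` is any coloring with both color classes dense in `ℚ`. -/
theorem isLinguage_shuffle₂ (L₀ L₁ : Type) (r₀ : L₀ → L₀ → Prop) (r₁ : L₁ → L₁ → Prop)
    (h₀ : IsLinguageOf L₀ r₀) (h₁ : IsLinguageOf L₁ r₁)
    (χ : ℚ → Bool) (hχ : ∀ i : Bool, ∀ a b : ℚ, a < b → ∃ q, a < q ∧ q < b ∧ χ q = i) :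
    IsLinguageOf ((q : ℚ) × boolFam L₀ L₁ (χ q))
      (Sigma.Lex (· < ·) (fun q => boolFamRel r₀ r₁ (χ q))) := by
  obtain ⟨M₀, ⟨e₀⟩⟩ := h₀
  obtain ⟨M₁, ⟨e₁⟩⟩ := h₁
  -- the color-preserving isomorphism ℚ ≃o Node
  have hdQ : ColDense χ := fun i a b h => hχ i a b h
  have hdN : ColDense (γ := Node) ncol := ncol_dense
  obtain ⟨φ, hφ⟩ := colored_iso (α := ℚ) (β := Node) χ ncol hdQ hdN
  -- the fiber maps
  let g : ∀ i : Bool, boolFam L₀ L₁ i → List Bool := fun i =>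
    match i with
    | false => fun l => (e₀ l).1
    | true => fun l => (e₁ l).1
  have gmem : ∀ i l, goodW M₀ M₁ i (g i l) := by
    intro i l
    cases i
    · exact (e₀ l).2
    · exact (e₁ l).2
  have gord : ∀ i (l l' : boolFam L₀ L₁ i),
      boolFamRel r₀ r₁ i l l' ↔ inlt (g i l) (g i l') := by
    intro i l l'
    cases i
    · exact (e₀.map_rel_iff (a := l) (b := l')).symm
    · exact (e₁.map_rel_iff (a := l) (b := l')).symm
  have ginj : ∀ i (l l' : boolFam L₀ L₁ i), g i l = g i l' → l = l' := by
    intro i l l' h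
    cases i
    · exact e₀.injective (Subtype.ext h)
    · exact e₁.injective (Subtype.ext h)
  have gsurj : ∀ i w, goodW M₀ M₁ i w → ∃ l, g i l = w := by
    intro i w hw
    cases i
    · exact ⟨e₀.symm ⟨w, hw⟩, congrArg Subtype.val (e₀.apply_symm_apply ⟨w, hw⟩)⟩
    · exact ⟨e₁.symm ⟨w, hw⟩, congrArg Subtype.val (e₁.apply_symm_apply ⟨w, hw⟩)⟩
  refine ⟨mkM M₀ M₁, ?_⟩
  -- the underlying function
  have fmem : ∀ p : (q : ℚ) × boolFam L₀ L₁ (χ q),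
      enc (φ p.1) (g (χ p.1) p.2) ∈ (mkM M₀ M₁).lang := by
    intro p
    rw [lang_char]
    refine ⟨φ p.1, g (χ p.1) p.2, rfl, ?_⟩
    have : (φ p.1 : List Bool).getLastD false = χ p.1 := hφ p.1
    rw [this]
    exact gmem _ _
  let f : ((q : ℚ) × boolFam L₀ L₁ (χ q)) → (mkM M₀ M₁).lang :=
    fun p => ⟨enc (φ p.1) (g (χ p.1) p.2), fmem p⟩
  have finj : Function.Injective f := by
    rintro ⟨q, l⟩ ⟨q', l'⟩ h
    have h2 := Subtype.ext_iff.mp h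
    obtain ⟨h3, h4⟩ := enc_inj h2
    have hq : q = q' := φ.injective h3
    subst hq
    have hl : l = l' := ginj _ _ _ h4
    subst hl
    rfl
  have fsurj : Function.Surjective f := by
    rintro ⟨x, hx⟩
    rw [lang_char] at hx
    obtain ⟨u, w, rfl, hg⟩ := hx
    set q := φ.symm u with hqdef
    have hu : φ q = u := φ.apply_symm_apply u
    have hcu : (u : List Bool).getLastD false = χ q := by
      have := hφ q
      rw [hu] at this
      exact this
    rw [hcu] at hg
    obtain ⟨l, hl⟩ := gsurj _ w hg
    refine ⟨⟨q, l⟩, ?_⟩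
    apply Subtype.ext
    show enc (φ q) (g (χ q) l) = enc u w
    rw [hu, hl]
  have ford : ∀ p p' : (q : ℚ) × boolFam L₀ L₁ (χ q),
      inlt (f p).1 (f p').1 ↔
        Sigma.Lex (· < ·) (fun q => boolFamRel r₀ r₁ (χ q)) p p' := by
    rintro ⟨q, l⟩ ⟨q', l'⟩
    show inlt (enc (φ q) (g (χ q) l)) (enc (φ q') (g (χ q') l')) ↔ _
    rw [enc_inlt (φ q) (φ q')]
    constructor
    · rintro (h | ⟨h1, h2⟩)
      · exact Sigma.Lex.left _ _ (φ.lt_iff_lt.mp h)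
      · have hq : q = q' := φ.injective h1
        subst hq
        exact Sigma.Lex.right _ _ ((gord _ _ _).mpr h2)
    · intro h
      cases h with
      | left _ _ h => exact Or.inl (φ.lt_iff_lt.mpr h)
      | right _ _ h => exact Or.inr ⟨rfl, (gord _ _ _).mp h⟩
  exact ⟨⟨Equiv.ofBijective f ⟨finj, fsurj⟩, fun {p p'} => ford p p'⟩⟩
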